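/- Let μ' be a nonnegative, finite, atomless Borel measure on [0,∞) and let κ ∈ (0,1). Define f : (0,∞) → [0,∞] by f(x) = ∫_{(x,∞)} y^{−κ} dμ'(y). Then ∫₀^∞ f(x)^{1/κ} dx ≤ μ'([0,∞))^{1/κ}; in particular f ∈ L^{1/κ}((0,∞)). -/

import Mathlib

open MeasureTheory Metric Filter
open scoped ENNReal NNReal

noncomputable section

/-- Radial derivative ∂_r f(x) = (x/|x|)·∇f(x). -/
def radialDeriv {d : ℕ} (f : EuclideanSpace ℝ (Fin d) → ℝ) (x : EuclideanSpace ℝ (Fin d)) : ℝ :=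
  (inner ℝ ((‖x‖⁻¹ : ℝ) • x) (gradient f x) : ℝ)

/-- Angular part of the gradient: ∇̸f = ∇f − (∂_r f)(x/|x|). -/
def angGrad {d : ℕ} (f : EuclideanSpace ℝ (Fin d) → ℝ) (x : EuclideanSpace ℝ (Fin d)) :
    EuclideanSpace ℝ (Fin d) :=
  gradient f x - radialDeriv f x • ((‖x‖⁻¹ : ℝ) • x)

/-- Laplacian as the sum of second derivatives along coordinate directions. -/
def lap {d : ℕ} (f : EuclideanSpace ℝ (Fin d) → ℝ) (x : EuclideanSpace ℝ (Fin d)) : ℝ :=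
  ∑ i, fderiv ℝ (fun y => fderiv ℝ f y (EuclideanSpace.single i 1)) x (EuclideanSpace.single i 1)

/-- λ_d = (d−1)(d−3)/4. -/
def lam (d : ℕ) : ℝ := ((d : ℝ) - 1) * ((d : ℝ) - 3) / 4

/-- Assumption (A1) on the pair (d,p). -/
def A1 (d : ℕ) (p : ℝ) : Prop :=
  (3 ≤ d ∧ d ≤ 6 ∧ 1 + 4 / ((d : ℝ) - 1) ≤ p ∧ p < 1 + 4 / ((d : ℝ) - 2)) ∨
  (7 ≤ d ∧ d ≤ 9 ∧ 1 + 4 / ((d : ℝ) - 1) ≤ p ∧ p ≤ 1 + 3 / ((d : ℝ) - 3))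

/-- A classical solution of the defocusing wave equation
`∂_t² u = Δu − |u|^{p−1}u`, smooth and supported in `{|x| ≤ R₀ + |t|}`. -/
def IsClassicalSolution (d : ℕ) (p : ℝ) (u : EuclideanSpace ℝ (Fin d) → ℝ → ℝ) : Prop :=
  ContDiff ℝ (⊤ : ℕ∞) (fun q : EuclideanSpace ℝ (Fin d) × ℝ => u q.1 q.2) ∧
  (∀ x t, deriv (deriv (u x)) t = lap (fun y => u y t) x - |u x t| ^ (p - 1) * u x t) ∧
  ∃ R₀ > 0, ∀ (x : EuclideanSpace ℝ (Fin d)) (t : ℝ), R₀ + |t| ≤ ‖x‖ → u x t = 0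

/-- Conserved energy of a solution (computed at time 0). -/
def energy (d : ℕ) (p : ℝ) (u : EuclideanSpace ℝ (Fin d) → ℝ → ℝ) : ℝ :=
  ∫ x, ((1/2) * ‖gradient (fun y => u y 0) x‖^2 + (1/2) * (deriv (u x) 0)^2
    + (1/(p+1)) * |u x 0| ^ (p+1))

/-- L₊u = ∂_r u + ((d−1)/2)u/|x| + ∂_t u. -/
def Lplus {d : ℕ} (u : EuclideanSpace ℝ (Fin d) → ℝ → ℝ)
    (x : EuclideanSpace ℝ (Fin d)) (t : ℝ) : ℝ :=
  radialDeriv (fun y => u y t) x + ((d : ℝ) - 1) / 2 * u x t / ‖x‖ + deriv (u x) t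

/-- L₋u = ∂_r u + ((d−1)/2)u/|x| − ∂_t u. -/
def Lminus {d : ℕ} (u : EuclideanSpace ℝ (Fin d) → ℝ → ℝ)
    (x : EuclideanSpace ℝ (Fin d)) (t : ℝ) : ℝ :=
  radialDeriv (fun y => u y t) x + ((d : ℝ) - 1) / 2 * u x t / ‖x‖ - deriv (u x) t

/-- The non-directional energy density e′(x,t). -/
def ePrime {d : ℕ} (p : ℝ) (u : EuclideanSpace ℝ (Fin d) → ℝ → ℝ)
    (x : EuclideanSpace ℝ (Fin d)) (t : ℝ) : ℝ :=
  (1/2) * ‖angGrad (fun y => u y t) x‖^2 + lam d / 2 * (u x t)^2 / ‖x‖^2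
    + (1/(p+1)) * |u x t| ^ (p+1)

/-- The inward energy E_−(t). -/
def eMinus {d : ℕ} (p : ℝ) (u : EuclideanSpace ℝ (Fin d) → ℝ → ℝ) (t : ℝ) : ℝ :=
  ∫ x, ((1/4) * (Lplus u x t)^2 + lam d / 4 * (u x t)^2 / ‖x‖^2
    + (1/4) * ‖angGrad (fun y => u y t) x‖^2 + (1/(2*(p+1))) * |u x t| ^ (p+1))

/-- The outward energy E₊(t). -/
def ePlus {d : ℕ} (p : ℝ) (u : EuclideanSpace ℝ (Fin d) → ℝ → ℝ) (t : ℝ) : ℝ :=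
  ∫ x, ((1/4) * (Lminus u x t)^2 + lam d / 4 * (u x t)^2 / ‖x‖^2
    + (1/4) * ‖angGrad (fun y => u y t) x‖^2 + (1/(2*(p+1))) * |u x t| ^ (p+1))

/-- The Morawetz density M(x,t). -/
def mor {d : ℕ} (p : ℝ) (u : EuclideanSpace ℝ (Fin d) → ℝ → ℝ)
    (x : EuclideanSpace ℝ (Fin d)) (t : ℝ) : ℝ :=
  (1/2) * ‖angGrad (fun y => u y t) x‖^2 / ‖x‖ + lam d / 2 * (u x t)^2 / ‖x‖^3
    + ((d : ℝ) - 1) * (p - 1) / (4 * (p + 1)) * (|u x t| ^ (p+1) / ‖x‖)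

/-- c_d = ((d−1)²/16)·σ(𝕊^{d−1}). -/
def cConst (d : ℕ) : ℝ :=
  (((d : ℝ) - 1)^2 / 16) *
    (μH[(d : ℝ) - 1] (sphere (0 : EuclideanSpace ℝ (Fin d)) 1)).toReal

/-- for a finite atomless Borel measure μ' on [0,∞) and 0 < κ < 1, the
function f(x) = ∫_{(x,∞)} y^{−κ} dμ'(y) satisfies ‖f‖_{L^{1/κ}} ≤ μ'([0,∞)); in particular
f ∈ L^{1/κ}((0,∞)). -/
lemma stmt18_key (μ' : Measure ℝ) [IsFiniteMeasure μ'] (κ : ℝ) (hκ0 : 0 < κ) (hκ1 : κ < 1)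
    (ε N : ℝ) (hε : 0 < ε) :
    (∫⁻ x in Set.Ioo ε N,
        (∫⁻ y in Set.Ioi x, ENNReal.ofReal (y ^ (-κ)) ∂μ') ^ ((1:ℝ)/κ))
      ≤ (μ' (Set.Ici (0 : ℝ))) ^ ((1:ℝ)/κ) := by
  set f : ℝ → ℝ≥0∞ := fun x => ∫⁻ y in Set.Ioi x, ENNReal.ofReal (y ^ (-κ)) ∂μ' with hf_def
  have hf_anti : Antitone f := fun a b hab =>
    lintegral_mono_set (Set.Ioi_subset_Ioi hab)
  have hf_meas : Measurable f := hf_anti.measurable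
  set g : ℝ → ℝ≥0∞ := fun y => ENNReal.ofReal (y ^ (-κ)) with hg_def
  have hg_meas : Measurable g :=
    ENNReal.measurable_ofReal.comp (measurable_id.pow_const (-κ))
  set S : Set ℝ := Set.Ioo ε N with hS_def
  set A : ℝ≥0∞ := ∫⁻ x in S, f x ^ ((1:ℝ)/κ) with hA_def
  set M : ℝ≥0∞ := μ' (Set.Ici (0 : ℝ)) with hM_def
  have hκ0' : (0:ℝ) < 1/κ := by positivity
  have hκ1' : (0:ℝ) ≤ 1/κ - 1 := by
    rw [sub_nonneg, le_div_iff₀ hκ0, one_mul]; exact hκ1.le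
  -- Step 1 : A ≠ ⊤
  have hfb : ∀ x ∈ S, f x ≤ ENNReal.ofReal (ε ^ (-κ)) * μ' Set.univ := by
    intro x hx
    calc f x ≤ ∫⁻ _ in Set.Ioi x, ENNReal.ofReal (ε ^ (-κ)) ∂μ' := by
          refine setLIntegral_mono measurable_const (fun y hy => ?_)
          exact ENNReal.ofReal_le_ofReal
            (Real.rpow_le_rpow_of_nonpos hε (hx.1.trans hy).le (neg_nonpos.mpr hκ0.le))
      _ = ENNReal.ofReal (ε ^ (-κ)) * μ' (Set.Ioi x) := setLIntegral_const _ _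
      _ ≤ ENNReal.ofReal (ε ^ (-κ)) * μ' Set.univ := by
          gcongr; exact Set.subset_univ _
  have hA_ne_top : A ≠ ⊤ := by
    have : A ≤ (ENNReal.ofReal (ε ^ (-κ)) * μ' Set.univ) ^ ((1:ℝ)/κ) * volume S := by
      rw [hA_def]
      calc ∫⁻ x in S, f x ^ ((1:ℝ)/κ)
          ≤ ∫⁻ _ in S, (ENNReal.ofReal (ε ^ (-κ)) * μ' Set.univ) ^ ((1:ℝ)/κ) := by
            refine setLIntegral_mono measurable_const (fun x hx => ?_)
            exact ENNReal.rpow_le_rpow (hfb x hx) hκ0'.le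
        _ = _ := setLIntegral_const _ _
    refine ne_top_of_le_ne_top ?_ this
    refine ENNReal.mul_ne_top (ENNReal.rpow_ne_top_of_nonneg hκ0'.le
      (ENNReal.mul_ne_top ENNReal.ofReal_ne_top (measure_ne_top _ _))) ?_
    simp [hS_def, Real.volume_Ioo]
  -- Step 2 : Tonelli
  set F : ℝ × ℝ → ℝ≥0∞ := fun z =>
    f z.1 ^ ((1:ℝ)/κ - 1) * Set.indicator {q : ℝ × ℝ | q.1 < q.2} (fun q => g q.2) z with hF_def
  have hF_meas : Measurable F := by
    refine Measurable.mul ?_ ?_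
    · exact (hf_meas.comp measurable_fst).pow_const _
    · exact (hg_meas.comp measurable_snd).indicator
        (measurableSet_lt measurable_fst measurable_snd)
  have hinner : ∀ x, (∫⁻ y, F (x, y) ∂μ') = f x ^ ((1:ℝ)/κ - 1) * f x := by
    intro x
    have : (fun y => F (x, y)) =
        fun y => f x ^ ((1:ℝ)/κ - 1) * (Set.Ioi x).indicator g y := by
      funext y
      simp only [hF_def, Set.indicator_apply, Set.mem_setOf_eq, Set.mem_Ioi]
    rw [this, lintegral_const_mul _ (hg_meas.indicator measurableSet_Ioi),
      lintegral_indicator measurableSet_Ioi _]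
  have hswap : A = ∫⁻ y, ∫⁻ x in S, F (x, y) ∂volume ∂μ' := by
    have h1 : A = ∫⁻ x in S, ∫⁻ y, F (x, y) ∂μ' := by
      rw [hA_def]
      refine lintegral_congr (fun x => ?_)
      rw [hinner x]
      have h := ENNReal.rpow_add_of_nonneg (x := f x) ((1:ℝ)/κ - 1) 1 hκ1' zero_le_one
      rw [sub_add_cancel, ENNReal.rpow_one] at h
      exact h
    rw [h1]
    exact lintegral_lintegral_swap (μ := volume.restrict S) (ν := μ')
      (f := fun x y => F (x, y)) hF_meas.aemeasurable
  -- Step 3 : inner bound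
  have hIB : ∀ y, (∫⁻ x in S, F (x, y) ∂volume)
      ≤ Set.indicator (Set.Ioi ε) (fun _ => A ^ (1 - κ)) y := by
    intro y
    have hFx : ∀ x, F (x, y) = (Set.Iio y).indicator
        (fun x => f x ^ ((1:ℝ)/κ - 1) * g y) x := by
      intro x
      simp only [hF_def, Set.indicator_apply, Set.mem_setOf_eq, Set.mem_Iio]
      by_cases h : x < y <;> simp [h]
    have hres : (∫⁻ x in S, F (x, y) ∂volume)
        = ∫⁻ x in S ∩ Set.Iio y, f x ^ ((1:ℝ)/κ - 1) * g y ∂volume := by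
      simp_rw [hFx]
      rw [lintegral_indicator measurableSet_Iio _, Measure.restrict_restrict measurableSet_Iio,
        Set.inter_comm]
    rw [hres]
    by_cases hy : y ≤ ε
    · have hempty : S ∩ Set.Iio y = ∅ := by
        ext x
        simp only [hS_def, Set.mem_inter_iff, Set.mem_Ioo, Set.mem_Iio, Set.mem_empty_iff_false,
          iff_false]
        rintro ⟨⟨h1, _⟩, h2⟩
        exact absurd (h2.trans_le hy) (not_lt.mpr h1.le)
      rw [hempty]
      simp [Set.indicator_apply, Set.mem_Ioi]
    · push_neg at hy
      have hy0 : 0 < y := hε.trans hy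
      have hconj : Real.HolderConjugate (1/(1-κ)) (1/κ) := by
        rw [Real.holderConjugate_iff]
        constructor
        · rw [lt_div_iff₀ (by linarith)]; linarith
        · rw [one_div, one_div, inv_inv, inv_inv]; ring
      have hexp : ((1:ℝ)/κ - 1) * (1/(1-κ)) = 1/κ := by
        have h1 : (1:ℝ) - κ ≠ 0 := by linarith
        field_simp
      have hq1 : (∫⁻ x in S ∩ Set.Iio y, (f x ^ ((1:ℝ)/κ - 1)) ^ (1/(1-κ)) ∂volume) ≤ A := by
        calc (∫⁻ x in S ∩ Set.Iio y, (f x ^ ((1:ℝ)/κ - 1)) ^ (1/(1-κ)) ∂volume)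
            = ∫⁻ x in S ∩ Set.Iio y, f x ^ ((1:ℝ)/κ) ∂volume := by
              refine lintegral_congr (fun x => ?_)
              rw [← ENNReal.rpow_mul, hexp]
          _ ≤ A := lintegral_mono_set Set.inter_subset_left
      have hq2 : (∫⁻ _ in S ∩ Set.Iio y, ((1:ℝ≥0∞)) ^ ((1:ℝ)/κ) ∂volume) ≤ ENNReal.ofReal y := by
        calc (∫⁻ _ in S ∩ Set.Iio y, ((1:ℝ≥0∞)) ^ ((1:ℝ)/κ) ∂volume)
            = volume (S ∩ Set.Iio y) := by simp
          _ ≤ volume (Set.Ioo 0 y) := by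
              refine measure_mono (fun x hx => ?_)
              exact ⟨hε.trans hx.1.1, hx.2⟩
          _ = ENNReal.ofReal y := by simp [Real.volume_Ioo]
      have hhold : (∫⁻ x in S ∩ Set.Iio y, f x ^ ((1:ℝ)/κ - 1) ∂volume)
          ≤ A ^ (1 - κ) * (ENNReal.ofReal y) ^ κ := by
        have hH := ENNReal.lintegral_mul_le_Lp_mul_Lq
          (volume.restrict (S ∩ Set.Iio y)) hconj
          ((hf_meas.pow_const _).aemeasurable) aemeasurable_const
          (f := fun x => f x ^ ((1:ℝ)/κ - 1)) (g := fun _ => (1:ℝ≥0∞))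
        simp only [Pi.mul_apply, mul_one, one_div_one_div] at hH
        refine hH.trans ?_
        exact mul_le_mul' (ENNReal.rpow_le_rpow hq1 (by linarith))
          (ENNReal.rpow_le_rpow hq2 hκ0.le)
      calc (∫⁻ x in S ∩ Set.Iio y, f x ^ ((1:ℝ)/κ - 1) * g y ∂volume)
          = g y * ∫⁻ x in S ∩ Set.Iio y, f x ^ ((1:ℝ)/κ - 1) ∂volume := by
            rw [← lintegral_const_mul _ (hf_meas.pow_const _)]
            refine lintegral_congr (fun x => mul_comm _ _)
        _ ≤ g y * (A ^ (1 - κ) * (ENNReal.ofReal y) ^ κ) := by gcongr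
        _ = A ^ (1 - κ) * (g y * (ENNReal.ofReal y) ^ κ) := by ring
        _ = A ^ (1 - κ) := by
            rw [hg_def]
            have : ENNReal.ofReal y ^ κ = ENNReal.ofReal (y ^ κ) :=
              ENNReal.ofReal_rpow_of_pos hy0
            rw [this, ← ENNReal.ofReal_mul (by positivity), ← Real.rpow_add hy0]
            norm_num
        _ = Set.indicator (Set.Ioi ε) (fun _ => A ^ (1 - κ)) y := by
            rw [Set.indicator_of_mem (Set.mem_Ioi.mpr hy)]
  -- Step 4: conclude A ≤ A^{1-κ} * M
  have hAM : A ≤ A ^ (1 - κ) * M := by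
    calc A = ∫⁻ y, ∫⁻ x in S, F (x, y) ∂volume ∂μ' := hswap
      _ ≤ ∫⁻ y, Set.indicator (Set.Ioi ε) (fun _ => A ^ (1 - κ)) y ∂μ' :=
          lintegral_mono hIB
      _ = A ^ (1 - κ) * μ' (Set.Ioi ε) := by
          rw [lintegral_indicator measurableSet_Ioi _, setLIntegral_const]
      _ ≤ A ^ (1 - κ) * M := by
          exact mul_le_mul_right (measure_mono (fun x hx => (hε.trans hx).le)) _
  -- Step 5: A ≤ M ^ (1/κ)
  have hfinal : A ≤ M ^ ((1:ℝ)/κ) := by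
    rcases eq_or_ne A 0 with hA0 | hA0
    · rw [hA0]; exact zero_le
    · have h1 : A ^ (1-κ) * A ^ κ ≤ A ^ (1-κ) * M := by
        rw [← ENNReal.rpow_add_of_nonneg _ _ (by linarith) hκ0.le, sub_add_cancel,
          ENNReal.rpow_one]
        exact hAM
      have h2 : A ^ κ ≤ M := by
        rwa [ENNReal.mul_le_mul_iff_right
          (by simp [ENNReal.rpow_eq_zero_iff, hA0, hA_ne_top])
          (ENNReal.rpow_ne_top_of_nonneg (by linarith) hA_ne_top)] at h1
      calc A = (A ^ κ) ^ ((1:ℝ)/κ) := by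
            rw [← ENNReal.rpow_mul, mul_one_div, div_self hκ0.ne', ENNReal.rpow_one]
        _ ≤ M ^ ((1:ℝ)/κ) := ENNReal.rpow_le_rpow h2 hκ0'.le
  exact hfinal

theorem stmt18 (μ' : Measure ℝ) [IsFiniteMeasure μ'] [NullSingletonClass μ']
    (hsupp : μ' (Set.Iio (0 : ℝ)) = 0) (κ : ℝ) (hκ0 : 0 < κ) (hκ1 : κ < 1) :
    (∫⁻ x in Set.Ioi (0 : ℝ),
        (∫⁻ y in Set.Ioi x, ENNReal.ofReal (y ^ (-κ)) ∂μ') ^ ((1:ℝ)/κ))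
      ≤ (μ' (Set.Ici (0 : ℝ))) ^ ((1:ℝ)/κ)
    ∧ (∫⁻ x in Set.Ioi (0 : ℝ),
        (∫⁻ y in Set.Ioi x, ENNReal.ofReal (y ^ (-κ)) ∂μ') ^ ((1:ℝ)/κ)) ≠ ⊤ := by
  set f : ℝ → ℝ≥0∞ := fun x => ∫⁻ y in Set.Ioi x, ENNReal.ofReal (y ^ (-κ)) ∂μ' with hf_def
  have hf_anti : Antitone f := fun a b hab => lintegral_mono_set (Set.Ioi_subset_Ioi hab)
  have hf_meas : Measurable f := hf_anti.measurable
  set M : ℝ≥0∞ := μ' (Set.Ici (0:ℝ)) with hM_def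
  set s : ℕ → Set ℝ := fun n => Set.Ioo ((n:ℝ)+1)⁻¹ ((n:ℝ)+1) with hs_def
  have hsub : ∀ n, s n ⊆ Set.Ioi (0:ℝ) := fun n x hx =>
    lt_trans (by positivity) hx.1
  have hmono : Monotone fun n => Set.indicator (s n) (fun x => f x ^ ((1:ℝ)/κ)) := by
    intro m n hmn
    refine Set.indicator_le_indicator_of_subset ?_ (fun a => zero_le)
    refine Set.Ioo_subset_Ioo ?_ ?_
    · have h := (Nat.cast_le (α := ℝ)).mpr hmn
      exact inv_anti₀ (by positivity) (by linarith)
    · have h := (Nat.cast_le (α := ℝ)).mpr hmn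
      linarith
  have hsup : ∀ x, Set.indicator (Set.Ioi (0:ℝ)) (fun x => f x ^ ((1:ℝ)/κ)) x
      = ⨆ n, Set.indicator (s n) (fun x => f x ^ ((1:ℝ)/κ)) x := by
    intro x
    by_cases hx : 0 < x
    · obtain ⟨n, hn⟩ : ∃ n : ℕ, x ∈ s n := by
        refine ⟨⌈max x x⁻¹⌉₊, ?_, ?_⟩
        · have h1 : x⁻¹ < (⌈max x x⁻¹⌉₊ : ℝ) + 1 :=
            lt_of_le_of_lt (le_max_right _ _) (lt_of_le_of_lt (Nat.le_ceil _) (lt_add_one _))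
          have h2 : (0:ℝ) < (⌈max x x⁻¹⌉₊ : ℝ) + 1 := by positivity
          rw [inv_lt_comm₀ h2 hx]
          exact h1
        · exact lt_of_le_of_lt (le_max_left _ _)
            (lt_of_le_of_lt (Nat.le_ceil _) (lt_add_one _))
      rw [Set.indicator_of_mem (Set.mem_Ioi.mpr hx)]
      refine le_antisymm ?_ (iSup_le fun m => Set.indicator_apply_le (fun _ => le_rfl))
      rw [← Set.indicator_of_mem hn (fun x => f x ^ ((1:ℝ)/κ))]
      exact le_iSup (fun n => Set.indicator (s n) (fun x => f x ^ ((1:ℝ)/κ)) x) n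
    · rw [Set.indicator_of_notMem (by simpa using hx)]
      symm
      simp only [ENNReal.iSup_eq_zero]
      exact fun n => Set.indicator_of_notMem (fun h => hx (hsub n h)) _
  have hkey : (∫⁻ x in Set.Ioi (0:ℝ), f x ^ ((1:ℝ)/κ))
      = ⨆ n, ∫⁻ x in s n, f x ^ ((1:ℝ)/κ) := by
    rw [← lintegral_indicator measurableSet_Ioi]
    simp_rw [hsup]
    rw [lintegral_iSup (fun n => (hf_meas.pow_const _).indicator measurableSet_Ioo) hmono]
    exact iSup_congr (fun n => lintegral_indicator measurableSet_Ioo _)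
  have hbound : ∀ n, (∫⁻ x in s n, f x ^ ((1:ℝ)/κ)) ≤ M ^ ((1:ℝ)/κ) :=
    fun n => stmt18_key μ' κ hκ0 hκ1 _ _ (by positivity)
  have hle : (∫⁻ x in Set.Ioi (0:ℝ), f x ^ ((1:ℝ)/κ)) ≤ M ^ ((1:ℝ)/κ) := by
    rw [hkey]; exact iSup_le hbound
  exact ⟨hle, ne_top_of_le_ne_top
    (ENNReal.rpow_ne_top_of_nonneg (by positivity) (measure_ne_top _ _)) hle⟩
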